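/- Let Y be a real inner product space and G : X → Y a linear map, and suppose there is a constant C ≥ 0 such that ‖G v‖ ≤ C ‖v‖ for all v in span{u_1, …, u_M}. Then for every 0 ≤ l ≤ d_p, (1/M) Σ_{j=1}^M ‖G(u_j − P_l u_j)‖² ≤ C² Σ_{k=l+1}^{d_p} λ_k. -/

import Mathlib

open scoped RealInnerProductSpace
open Finset

/-- If `G` is bounded by `C` on the span of the snapshots, then the mean squared
`G`-error of the POD projection is bounded by `C² Σ_{l < k ≤ dp} λ_k`. -/
theorem pod_bounded_map_projection_error
    {X : Type*} [NormedAddCommGroup X] [InnerProductSpace ℝ X]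
    (M : ℕ) (hM : 1 ≤ M) (u : Fin M → X)
    (K : Matrix (Fin M) (Fin M) ℝ)
    (hK : ∀ i j, K i j = (1 / (M : ℝ)) * ⟪u i, u j⟫)
    (v : Fin M → Fin M → ℝ)
    (hvON : ∀ k l, ∑ j, v k j * v l j = if k = l then (1 : ℝ) else 0)
    (lam : Fin M → ℝ)
    (heig : ∀ k, K.mulVec (v k) = lam k • v k)
    (hmono : ∀ k l : Fin M, k ≤ l → lam l ≤ lam k)
    (hnonneg : ∀ k, 0 ≤ lam k)
    (dp : ℕ) (hdpM : dp ≤ M)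
    (hpos : ∀ k : Fin M, (k : ℕ) < dp → 0 < lam k)
    (hzero : ∀ k : Fin M, dp ≤ (k : ℕ) → lam k = 0)
    (ψ : Fin M → X)
    (hψ : ∀ k : Fin M, ψ k =
      (Real.sqrt M * Real.sqrt (lam k))⁻¹ • ∑ j, v k j • u j)
    {Y : Type*} [NormedAddCommGroup Y] [InnerProductSpace ℝ Y]
    (G : X →ₗ[ℝ] Y)
    (C : ℝ) (hC : 0 ≤ C)
    (hGC : ∀ w ∈ Submodule.span ℝ (Set.range u), ‖G w‖ ≤ C * ‖w‖)
    (l : ℕ) (hl : l ≤ dp) (P : X → X)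
    (hPmem : ∀ x, P x ∈ Submodule.span ℝ (ψ '' {k : Fin M | (k : ℕ) < l}))
    (hPorth : ∀ x, ∀ w ∈ Submodule.span ℝ (ψ '' {k : Fin M | (k : ℕ) < l}),
      ⟪x - P x, w⟫ = 0) :
    (1 / (M : ℝ)) * ∑ j, ‖G (u j - P (u j))‖ ^ 2
      ≤ C ^ 2 * ∑ k ∈ univ.filter (fun k : Fin M => l ≤ (k : ℕ) ∧ (k : ℕ) < dp), lam k := by
  classical
  have hM0 : (0:ℝ) < M := by exact_mod_cast Nat.lt_of_lt_of_le Nat.zero_lt_one hM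
  have hMne : (M:ℝ) ≠ 0 := ne_of_gt hM0
  have hsM : (0:ℝ) < Real.sqrt M := Real.sqrt_pos.mpr hM0
  have hMsq : Real.sqrt M * Real.sqrt M = (M:ℝ) := Real.mul_self_sqrt hM0.le
  -- inner products of snapshots
  have hinner : ∀ i j, ⟪u i, u j⟫ = (M:ℝ) * K i j := by
    intro i j; rw [hK]; field_simp
  -- column orthonormality of the eigenvectors
  have hcol : ∀ i j : Fin M, ∑ k, v k i * v k j = if i = j then (1:ℝ) else 0 := by
    intro i j
    let V : Matrix (Fin M) (Fin M) ℝ := Matrix.of v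
    have h1 : V * V.transpose = 1 := by
      ext k m
      simpa [V, Matrix.mul_apply, Matrix.one_apply] using hvON k m
    have h2 : V.transpose * V = 1 := mul_eq_one_comm.mp h1
    have h3 := congrFun (congrFun h2 i) j
    simpa [V, Matrix.mul_apply, Matrix.one_apply] using h3
  -- eigen equation, componentwise
  have heig' : ∀ k j : Fin M, ∑ i, K j i * v k i = lam k * v k j := by
    intro k j
    have := congrFun (heig k) j
    simpa [Matrix.mulVec, dotProduct, Pi.smul_apply, smul_eq_mul] using this
  -- coefficient formula
  have hc : ∀ (j k : Fin M), (k:ℕ) < dp →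
      ⟪u j, ψ k⟫ = Real.sqrt M * Real.sqrt (lam k) * v k j := by
    intro j k hk
    have hlam : 0 < lam k := hpos k hk
    have hlamsq : Real.sqrt (lam k) * Real.sqrt (lam k) = lam k := Real.mul_self_sqrt hlam.le
    have hslam : 0 < Real.sqrt (lam k) := Real.sqrt_pos.mpr hlam
    have hMlam : (M:ℝ) * lam k
        = (Real.sqrt M * Real.sqrt (lam k)) * (Real.sqrt M * Real.sqrt (lam k)) := by
      rw [mul_mul_mul_comm, hMsq, hlamsq]
    rw [hψ, real_inner_smul_right, inner_sum]
    have hstep : ∑ i, ⟪u j, v k i • u i⟫ = (M:ℝ) * (lam k * v k j) := by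
      calc ∑ i, ⟪u j, v k i • u i⟫ = ∑ i, v k i * ((M:ℝ) * K j i) := by
            simp [real_inner_smul_right, hinner]
        _ = (M:ℝ) * ∑ i, K j i * v k i := by rw [Finset.mul_sum]; congr 1; ext i; ring
        _ = (M:ℝ) * (lam k * v k j) := by rw [heig']
    rw [hstep]
    field_simp
    linear_combination (v k j) * hMlam
  -- orthonormality of the POD modes
  have hψON : ∀ k m : Fin M, (k:ℕ) < dp → (m:ℕ) < dp →
      ⟪ψ k, ψ m⟫ = if k = m then (1:ℝ) else 0 := by
    intro k m hk hm
    have hlam : 0 < lam k := hpos k hk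
    have hslam : 0 < Real.sqrt (lam k) := Real.sqrt_pos.mpr hlam
    rw [hψ k, real_inner_smul_left, sum_inner]
    have hstep : ∑ i, ⟪v k i • u i, ψ m⟫
        = Real.sqrt M * Real.sqrt (lam m) * (if k = m then (1:ℝ) else 0) := by
      calc ∑ i, ⟪v k i • u i, ψ m⟫
          = ∑ i, v k i * (Real.sqrt M * Real.sqrt (lam m) * v m i) := by
            refine Finset.sum_congr rfl fun i _ => ?_
            rw [real_inner_smul_left, hc i m hm]
        _ = Real.sqrt M * Real.sqrt (lam m) * ∑ i, v k i * v m i := by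
            rw [Finset.mul_sum]; congr 1; ext i; ring
        _ = _ := by rw [hvON k m]
    rw [hstep]
    by_cases hkm : k = m
    · subst hkm
      rw [if_pos rfl, mul_one]
      exact inv_mul_cancel₀ (ne_of_gt (mul_pos hsM hslam))
    · simp [hkm]
  -- the explicit projection Q
  set S : Finset (Fin M) := univ.filter (fun k : Fin M => (k:ℕ) < l) with hS
  set Q : Fin M → X := fun j => ∑ k ∈ S, ⟪u j, ψ k⟫ • ψ k with hQ
  have hSdp : ∀ k ∈ S, (k:ℕ) < dp := by
    intro k hk
    have : (k:ℕ) < l := by simpa [hS] using hk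
    exact lt_of_lt_of_le this hl
  have hQmem : ∀ j, Q j ∈ Submodule.span ℝ (ψ '' {k : Fin M | (k:ℕ) < l}) := by
    intro j
    refine Submodule.sum_mem _ fun k hk => Submodule.smul_mem _ _ (Submodule.subset_span ⟨k, ?_, rfl⟩)
    simpa [hS] using hk
  -- spans
  have huspan : ∀ j, u j ∈ Submodule.span ℝ (Set.range u) :=
    fun j => Submodule.subset_span ⟨j, rfl⟩
  have hψspan : ∀ k, ψ k ∈ Submodule.span ℝ (Set.range u) := by
    intro k
    rw [hψ]
    exact Submodule.smul_mem _ _ (Submodule.sum_mem _ fun i _ => Submodule.smul_mem _ _ (huspan i))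
  have hspanle : Submodule.span ℝ (ψ '' {k : Fin M | (k:ℕ) < l}) ≤ Submodule.span ℝ (Set.range u) := by
    rw [Submodule.span_le]
    rintro _ ⟨k, -, rfl⟩
    exact hψspan k
  have hdiff : ∀ j, u j - P (u j) ∈ Submodule.span ℝ (Set.range u) :=
    fun j => Submodule.sub_mem _ (huspan j) (hspanle (hPmem (u j)))
  -- boundedness of G on residuals
  have hGb : ∀ j, ‖G (u j - P (u j))‖^2 ≤ C^2 * ‖u j - P (u j)‖^2 := by
    intro j
    have h := hGC _ (hdiff j)
    calc ‖G (u j - P (u j))‖^2 ≤ (C * ‖u j - P (u j)‖)^2 :=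
          pow_le_pow_left₀ (norm_nonneg _) h 2
      _ = C^2 * ‖u j - P (u j)‖^2 := by ring
  -- best approximation property
  have hbest : ∀ j, ‖u j - P (u j)‖^2 ≤ ‖u j - Q j‖^2 := by
    intro j
    have hmem : P (u j) - Q j ∈ Submodule.span ℝ (ψ '' {k : Fin M | (k:ℕ) < l}) :=
      Submodule.sub_mem _ (hPmem (u j)) (hQmem j)
    have horth := hPorth (u j) _ hmem
    have hsplit : u j - Q j = (u j - P (u j)) + (P (u j) - Q j) := by abel
    have hnorm : ‖u j - Q j‖^2 = ‖u j - P (u j)‖^2 + ‖P (u j) - Q j‖^2 := by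
      rw [hsplit, norm_add_sq_real, horth]; ring
    nlinarith [sq_nonneg ‖P (u j) - Q j‖]
  -- value of the Q-residual
  have hQval : ∀ j, ‖u j - Q j‖^2 = ‖u j‖^2 - ∑ k ∈ S, ⟪u j, ψ k⟫^2 := by
    intro j
    have h1 : ⟪u j, Q j⟫ = ∑ k ∈ S, ⟪u j, ψ k⟫^2 := by
      rw [hQ]
      rw [inner_sum]
      refine Finset.sum_congr rfl fun k hk => ?_
      rw [real_inner_smul_right]; ring
    have h2 : ‖Q j‖^2 = ∑ k ∈ S, ⟪u j, ψ k⟫^2 := by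
      rw [← real_inner_self_eq_norm_sq, hQ, sum_inner]
      refine Finset.sum_congr rfl fun k hk => ?_
      rw [real_inner_smul_left, inner_sum]
      have hsum : ∑ m ∈ S, ⟪ψ k, ⟪u j, ψ m⟫ • ψ m⟫ = ⟪u j, ψ k⟫ := by
        rw [Finset.sum_eq_single k]
        · rw [real_inner_smul_right, hψON k k (hSdp k hk) (hSdp k hk)]
          simp
        · intro m hm hne
          rw [real_inner_smul_right, hψON k m (hSdp k hk) (hSdp m hm)]
          simp [Ne.symm hne]
        · intro h; exact absurd hk h
      rw [hsum]; ring
    rw [norm_sub_sq_real, h1, h2]; ring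
  -- sum of squared coefficients
  have hsumc : ∀ k : Fin M, (k:ℕ) < dp → ∑ j, ⟪u j, ψ k⟫^2 = (M:ℝ) * lam k := by
    intro k hk
    have hlamsq : Real.sqrt (lam k) * Real.sqrt (lam k) = lam k :=
      Real.mul_self_sqrt (hpos k hk).le
    calc ∑ j, ⟪u j, ψ k⟫^2 = ∑ j, (M:ℝ) * lam k * (v k j * v k j) := by
          refine Finset.sum_congr rfl fun j _ => ?_
          rw [hc j k hk]
          linear_combination (Real.sqrt (lam k) * Real.sqrt (lam k) * v k j * v k j) * hMsq
            + ((M:ℝ) * v k j * v k j) * hlamsq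
      _ = (M:ℝ) * lam k * ∑ j, v k j * v k j := by rw [Finset.mul_sum]
      _ = (M:ℝ) * lam k := by rw [hvON k k]; simp
  -- trace identity
  have hKdiag : ∀ j : Fin M, K j j = ∑ k, lam k * (v k j * v k j) := by
    intro j
    calc K j j = ∑ i, K j i * (if i = j then (1:ℝ) else 0) := by simp
      _ = ∑ i, K j i * ∑ k, v k i * v k j := by simp_rw [hcol]
      _ = ∑ i, ∑ k, K j i * (v k i * v k j) := by simp_rw [Finset.mul_sum]
      _ = ∑ k, ∑ i, K j i * (v k i * v k j) := Finset.sum_comm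
      _ = ∑ k, (∑ i, K j i * v k i) * v k j := by
            refine Finset.sum_congr rfl fun k _ => ?_
            rw [Finset.sum_mul]; congr 1; ext i; ring
      _ = ∑ k, lam k * (v k j * v k j) := by
            refine Finset.sum_congr rfl fun k _ => ?_
            rw [heig' k j]; ring
  have hsumu : ∑ j, ‖u j‖^2 = (M:ℝ) * ∑ k, lam k := by
    have h1 : ∀ j : Fin M, ‖u j‖^2 = (M:ℝ) * K j j := by
      intro j; rw [← real_inner_self_eq_norm_sq, hinner]
    calc ∑ j, ‖u j‖^2 = ∑ j, (M:ℝ) * K j j := by simp_rw [h1]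
      _ = (M:ℝ) * ∑ j, K j j := (Finset.mul_sum _ _ _).symm
      _ = (M:ℝ) * ∑ j, ∑ k, lam k * (v k j * v k j) := by simp_rw [hKdiag]
      _ = (M:ℝ) * ∑ k, ∑ j, lam k * (v k j * v k j) := by rw [Finset.sum_comm]
      _ = (M:ℝ) * ∑ k, lam k * ∑ j, v k j * v k j := by simp_rw [Finset.mul_sum]
      _ = (M:ℝ) * ∑ k, lam k := by simp_rw [hvON]; simp
  -- key identity
  have key : ∑ j, ‖u j - Q j‖^2
      = (M:ℝ) * ∑ k ∈ univ.filter (fun k : Fin M => l ≤ (k:ℕ)), lam k := by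
    have hsplit := Finset.sum_filter_add_sum_filter_not univ (fun k : Fin M => (k:ℕ) < l) lam
    rw [← hS] at hsplit
    have hnotf : (univ.filter (fun k : Fin M => ¬ (k:ℕ) < l))
        = univ.filter (fun k : Fin M => l ≤ (k:ℕ)) := by
      simp [not_lt]
    rw [hnotf] at hsplit
    calc ∑ j, ‖u j - Q j‖^2 = ∑ j, (‖u j‖^2 - ∑ k ∈ S, ⟪u j, ψ k⟫^2) := by simp_rw [hQval]
      _ = ∑ j, ‖u j‖^2 - ∑ j, ∑ k ∈ S, ⟪u j, ψ k⟫^2 := Finset.sum_sub_distrib _ _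
      _ = ∑ j, ‖u j‖^2 - ∑ k ∈ S, ∑ j, ⟪u j, ψ k⟫^2 := by rw [Finset.sum_comm]
      _ = (M:ℝ) * ∑ k, lam k - ∑ k ∈ S, (M:ℝ) * lam k := by
            rw [hsumu]; congr 1; exact Finset.sum_congr rfl fun k hk => hsumc k (hSdp k hk)
      _ = (M:ℝ) * (∑ k, lam k - ∑ k ∈ S, lam k) := by rw [mul_sub, Finset.mul_sum, Finset.mul_sum]
      _ = _ := by rw [← hsplit]; ring
  -- dropping the zero tail
  have htail : ∑ k ∈ univ.filter (fun k : Fin M => l ≤ (k:ℕ)), lam k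
      = ∑ k ∈ univ.filter (fun k : Fin M => l ≤ (k:ℕ) ∧ (k:ℕ) < dp), lam k := by
    refine (Finset.sum_subset ?_ ?_).symm
    · intro k hk
      simp only [Finset.mem_filter, Finset.mem_univ, true_and] at *
      exact hk.1
    · intro k hk hk2
      simp only [Finset.mem_filter, Finset.mem_univ, true_and, not_and, not_lt] at hk hk2
      exact hzero k (hk2 hk)
  -- assemble
  set T := ∑ k ∈ univ.filter (fun k : Fin M => l ≤ (k:ℕ) ∧ (k:ℕ) < dp), lam k with hT
  have main : ∑ j, ‖G (u j - P (u j))‖^2 ≤ C^2 * ((M:ℝ) * T) := by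
    calc ∑ j, ‖G (u j - P (u j))‖^2 ≤ ∑ j, C^2 * ‖u j - P (u j)‖^2 :=
          Finset.sum_le_sum fun j _ => hGb j
      _ = C^2 * ∑ j, ‖u j - P (u j)‖^2 := (Finset.mul_sum _ _ _).symm
      _ ≤ C^2 * ∑ j, ‖u j - Q j‖^2 :=
          mul_le_mul_of_nonneg_left (Finset.sum_le_sum fun j _ => hbest j) (by positivity)
      _ = C^2 * ((M:ℝ) * T) := by rw [key, htail]
  rw [one_div, inv_mul_le_iff₀ hM0]
  have heq : C^2 * ((M:ℝ) * T) = (M:ℝ) * (C^2 * T) := by ring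
  linarith [main, heq]
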